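/- If Γ ⊆ Ω(G) is nonempty and |⋃Γ| + |⋂Γ| = 2α(G), then the induced subgraph G[⋃Γ] is a König-Egerváry graph, i.e., α(G[⋃Γ]) + μ(G[⋃Γ]) = |⋃Γ|. -/

import Mathlib

open Set

variable {V : Type*}

/-- `S` is an independent set of `G`. -/
def IndepSet (G : SimpleGraph V) (S : Set V) : Prop :=
  ∀ x ∈ S, ∀ y ∈ S, ¬ G.Adj x y

/-- The independence number `α(G)`. -/
noncomputable def alpha (G : SimpleGraph V) : ℕ :=
  sSup {n | ∃ S : Set V, IndepSet G S ∧ S.ncard = n}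

/-- `S` is a maximum independent set of `G`. -/
def MaxIndep (G : SimpleGraph V) (S : Set V) : Prop :=
  IndepSet G S ∧ S.ncard = alpha G

/-- `Ω(G)`, the family of all maximum independent sets. -/
def Omega (G : SimpleGraph V) : Set (Set V) := {S | MaxIndep G S}

/-- `core(G)`, the intersection of all maximum independent sets. -/
def core (G : SimpleGraph V) : Set V := ⋂₀ Omega G

/-- `corona(G)`, the union of all maximum independent sets. -/
def corona (G : SimpleGraph V) : Set V := ⋃₀ Omega G

/-- The matching number `μ(G)`. -/
noncomputable def matchNum (G : SimpleGraph V) : ℕ :=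
  sSup {n | ∃ M : G.Subgraph, M.IsMatching ∧ M.edgeSet.ncard = n}

/-- A matching from `X` into `Y`: an injection `f` on `X` into `Y` such that each `x ∈ X`
is adjacent to `f x` and the edges `{x, f x}` are pairwise disjoint. -/
def MatchingFrom (G : SimpleGraph V) (X Y : Set V) : Prop :=
  ∃ f : V → V, Set.InjOn f X ∧ (∀ x ∈ X, f x ∈ Y ∧ G.Adj x (f x)) ∧
    ∀ x ∈ X, ∀ y ∈ X, x ≠ y → f x ≠ y

/-- neighbors of a set -/
def NS (G : SimpleGraph V) (W : Set V) : Set V := {v | ∃ w ∈ W, G.Adj w v}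

section Aux
variable [Finite V] {G : SimpleGraph V}

lemma indep_ncard_le_alpha {S : Set V} (hS : IndepSet G S) : S.ncard ≤ alpha G := by
  apply le_csSup
  · refine ⟨Nat.card V, ?_⟩
    rintro n ⟨T, _, rfl⟩
    rw [← Set.ncard_univ]
    exact Set.ncard_le_ncard (Set.subset_univ T) Set.finite_univ
  · exact ⟨S, hS, rfl⟩

lemma alpha_le {n : ℕ} (h : ∀ S : Set V, IndepSet G S → S.ncard ≤ n) : alpha G ≤ n := by
  refine csSup_le ⟨0, ∅, fun x hx => absurd hx (Set.notMem_empty x), Set.ncard_empty V⟩ ?_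
  rintro m ⟨S, hS, rfl⟩
  exact h S hS

lemma hall_pair {S' W : Set V} (hS' : MaxIndep G S') (hW : IndepSet G W)
    (hd : ∀ w ∈ W, w ∉ S') : W.ncard ≤ (NS G W ∩ S').ncard := by
  set T := (S' \ NS G W) ∪ W with hT
  have hTind : IndepSet G T := by
    rintro x (⟨hxS, hxN⟩ | hxW) y (⟨hyS, hyN⟩ | hyW) hadj
    · exact hS'.1 x hxS y hyS hadj
    · exact hxN ⟨y, hyW, hadj.symm⟩
    · exact hyN ⟨x, hxW, hadj⟩
    · exact hW x hxW y hyW hadj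
  have hle : T.ncard ≤ alpha G := indep_ncard_le_alpha hTind
  have hdisj : Disjoint (S' \ NS G W) W := by
    rw [Set.disjoint_right]
    intro w hw hw'
    exact hd w hw hw'.1
  have hunion : T.ncard = (S' \ NS G W).ncard + W.ncard :=
    Set.ncard_union_eq hdisj (Set.toFinite _) (Set.toFinite _)
  have hdiff : (S' ∩ NS G W).ncard + (S' \ NS G W).ncard = S'.ncard :=
    Set.ncard_inter_add_ncard_diff_eq_ncard S' (NS G W) (Set.toFinite _)
  have hSa : S'.ncard = alpha G := hS'.2
  rw [Set.inter_comm] at hdiff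
  omega

lemma core_no_adj {Γ : Set (Set V)} (hΓ : Γ ⊆ Omega G) {u v : V}
    (hu : u ∈ ⋃₀ Γ) (hv : v ∈ ⋂₀ Γ) : ¬ G.Adj u v := by
  obtain ⟨T, hT, huT⟩ := hu
  exact (hΓ hT).1 u huT v (hv T hT)


lemma NS_mono {W W' : Set V} (h : W ⊆ W') : NS G W ⊆ NS G W' := by
  rintro v ⟨w, hw, hadj⟩; exact ⟨w, h hw, hadj⟩

lemma hall_family {S : Set V} (hS : MaxIndep G S) :
    ∀ Γ : Set (Set V), Γ.Finite → Γ ⊆ Omega G →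
    ∀ W ⊆ S \ ⋂₀ insert S Γ, W.ncard ≤ (NS G W ∩ (⋃₀ insert S Γ \ S)).ncard := by
  intro Γ hfin
  refine Set.Finite.induction_on (motive := fun Γ _ => Γ ⊆ Omega G →
    ∀ W ⊆ S \ ⋂₀ insert S Γ, W.ncard ≤ (NS G W ∩ (⋃₀ insert S Γ \ S)).ncard) Γ hfin ?_ ?_
  · intro _ W hW
    have : W = ∅ := by
      rw [Set.eq_empty_iff_forall_notMem]
      intro w hw
      have := hW hw
      simp at this
    simp [this]
  · rintro S' Γ₀ - - ih hsub W hW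
    have hS'Ω : MaxIndep G S' := hsub (Set.mem_insert _ _)
    have hΓ₀ : Γ₀ ⊆ Omega G := fun T hT => hsub (Set.mem_insert_of_mem _ hT)
    set A := ⋂₀ insert S Γ₀ with hA
    set D := ⋃₀ insert S Γ₀ with hD
    have hWS : W ⊆ S := fun w hw => (hW hw).1
    -- W \ A handled by induction hypothesis
    have h1 : (W \ A).ncard ≤ (NS G (W \ A) ∩ (D \ S)).ncard := by
      refine ih hΓ₀ (W \ A) ?_
      intro w hw
      exact ⟨hWS hw.1, hw.2⟩
    -- W ∩ A handled by the pair lemma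
    have hWA : ∀ w ∈ W ∩ A, w ∉ S' := by
      rintro w ⟨hw, hwA⟩ hwS'
      refine (hW hw).2 ?_
      intro T hT
      rcases Set.mem_insert_iff.mp hT with rfl | hT
      · exact hWS hw
      rcases Set.mem_insert_iff.mp hT with rfl | hT
      · exact hwS'
      · exact hwA T (Set.mem_insert_of_mem _ hT)
    have h2 : (W ∩ A).ncard ≤ (NS G (W ∩ A) ∩ S').ncard := by
      refine hall_pair hS'Ω ?_ hWA
      intro x hx y hy
      exact hS.1 x (hWS hx.1) y (hWS hy.1)
    have h2' : NS G (W ∩ A) ∩ S' ⊆ NS G (W ∩ A) ∩ (S' \ (S ∪ D)) := by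
      rintro v ⟨⟨w, hw, hadj⟩, hvS'⟩
      refine ⟨⟨w, hw, hadj⟩, hvS', ?_⟩
      rintro (hvS | hvD)
      · exact hS.1 w (hWS hw.1) v hvS hadj
      · exact core_no_adj (G := G)
          (Γ := insert S Γ₀) (fun T hT => by
            rcases Set.mem_insert_iff.mp hT with rfl | hT
            · exact hS
            · exact hΓ₀ hT) hvD hw.2 hadj.symm
    have h2'' : (W ∩ A).ncard ≤ (NS G (W ∩ A) ∩ (S' \ (S ∪ D))).ncard :=
      le_trans h2 (Set.ncard_le_ncard h2' (Set.toFinite _))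
    set E1 := NS G (W \ A) ∩ (D \ S) with hE1
    set E2 := NS G (W ∩ A) ∩ (S' \ (S ∪ D)) with hE2
    have hdisj : Disjoint E1 E2 := by
      rw [Set.disjoint_left]
      rintro v ⟨_, hvD, _⟩ ⟨_, _, hv2⟩
      exact hv2 (Set.mem_union_right _ hvD)
    have hsubE : E1 ∪ E2 ⊆ NS G W ∩ (⋃₀ insert S (insert S' Γ₀) \ S) := by
      rintro v (⟨hvN, hvD, hvS⟩ | ⟨hvN, hvS', hv2⟩)
      · refine ⟨NS_mono (Set.diff_subset) hvN, ?_, hvS⟩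
        obtain ⟨T, hT, hvT⟩ := hvD
        rcases Set.mem_insert_iff.mp hT with rfl | hT
        · exact ⟨T, Set.mem_insert _ _, hvT⟩
        · exact ⟨T, Set.mem_insert_of_mem _ (Set.mem_insert_of_mem _ hT), hvT⟩
      · refine ⟨NS_mono (Set.inter_subset_left) hvN,
          ⟨S', Set.mem_insert_of_mem _ (Set.mem_insert _ _), hvS'⟩, ?_⟩
        exact fun hvS => hv2 (Set.mem_union_left _ hvS)
    have hcount : (E1 ∪ E2).ncard = E1.ncard + E2.ncard :=
      Set.ncard_union_eq hdisj (Set.toFinite _) (Set.toFinite _)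
    have hWsplit : (W ∩ A).ncard + (W \ A).ncard = W.ncard :=
      Set.ncard_inter_add_ncard_diff_eq_ncard W A (Set.toFinite _)
    have hfinal : (E1 ∪ E2).ncard ≤ (NS G W ∩ (⋃₀ insert S (insert S' Γ₀) \ S)).ncard :=
      Set.ncard_le_ncard hsubE (Set.toFinite _)
    omega

end Aux

section Aux2
variable {α : Type*} [Finite α] {H : SimpleGraph α}

lemma match_lower {M : H.Subgraph} (hM : M.IsMatching) {A : Set α}
    (hA : A ⊆ M.verts) (hind : ∀ x ∈ A, ∀ y ∈ A, ¬ H.Adj x y) :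
    A.ncard ≤ M.edgeSet.ncard := by
  classical
  have key : ∀ a, a ∈ M.verts → ∃ w, M.Adj a w := fun a ha => ⟨(hM ha).choose, (hM ha).choose_spec.1⟩
  set F : α → Sym2 α := fun a =>
    if h : a ∈ M.verts then s(a, (hM h).choose) else s(a, a) with hF
  have hmaps : ∀ a ∈ A, F a ∈ M.edgeSet := by
    intro a ha
    have h := hA ha
    simp only [hF, dif_pos h]
    exact (hM h).choose_spec.1
  have hinj : Set.InjOn F A := by
    intro a ha a' ha' heq
    have h : a ∈ M.verts := hA ha
    have h' : a' ∈ M.verts := hA ha'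
    simp only [hF, dif_pos h, dif_pos h', Sym2.eq, Sym2.rel_iff', Prod.mk.injEq,
      Prod.swap_prod_mk] at heq
    rcases heq with ⟨h1, _⟩ | ⟨h1, h2⟩
    · exact h1
    · exfalso
      have hadj : M.Adj a' a := by rw [h1]; exact (hM h').choose_spec.1
      exact hind a' ha' a ha (M.adj_sub hadj)
  exact Set.ncard_le_ncard_of_injOn F hmaps hinj (Set.toFinite _)

lemma match_upper {M : H.Subgraph} (hM : M.IsMatching) {T : Set α}
    (hind : ∀ x ∈ T, ∀ y ∈ T, ¬ H.Adj x y) :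
    M.edgeSet.ncard ≤ (Set.univ \ T).ncard := by
  classical
  have claim : ∀ e : Sym2 α, ∃ x, x ∈ e ∧ (e ∈ M.edgeSet → x ∉ T) := by
    intro e
    induction e with
    | _ a b =>
      by_cases he : s(a, b) ∈ M.edgeSet
      · have hadj : M.Adj a b := SimpleGraph.Subgraph.mem_edgeSet.mp he
        have hG : H.Adj a b := M.adj_sub hadj
        by_cases haT : a ∈ T
        · refine ⟨b, Sym2.mem_mk_right _ _, fun _ hbT => hind a haT b hbT hG⟩
        · exact ⟨a, Sym2.mem_mk_left _ _, fun _ => haT⟩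
      · exact ⟨a, Sym2.mem_mk_left _ _, fun h => absurd h he⟩
  set F : Sym2 α → α := fun e => (claim e).choose with hFdef
  have hmem : ∀ e, F e ∈ e := fun e => (claim e).choose_spec.1
  have hnT : ∀ e ∈ M.edgeSet, F e ∉ T := fun e he => (claim e).choose_spec.2 he
  have hmaps : ∀ e ∈ M.edgeSet, F e ∈ Set.univ \ T := fun e he => ⟨trivial, hnT e he⟩
  have hinj : Set.InjOn F M.edgeSet := by
    intro e he e' he' heq
    obtain ⟨w, hw⟩ := Sym2.mem_iff_exists.mp (hmem e)
    obtain ⟨w', hw'⟩ := Sym2.mem_iff_exists.mp (heq ▸ hmem e')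
    have hadj : M.Adj (F e) w := SimpleGraph.Subgraph.mem_edgeSet.mp (hw ▸ he)
    have hadj' : M.Adj (F e) w' := SimpleGraph.Subgraph.mem_edgeSet.mp (hw' ▸ he')
    have hv : F e ∈ M.verts := M.edge_vert hadj
    obtain ⟨z, _, hz⟩ := hM hv
    have : w = w' := by rw [hz w hadj, hz w' hadj']
    rw [hw, hw', this]
  exact Set.ncard_le_ncard_of_injOn F hmaps hinj (Set.toFinite _)

lemma matchNum_bddAbove : BddAbove {n | ∃ M : H.Subgraph, M.IsMatching ∧ M.edgeSet.ncard = n} := by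
  refine ⟨Nat.card (Sym2 α), ?_⟩
  rintro n ⟨M, _, rfl⟩
  rw [← Set.ncard_univ]
  exact Set.ncard_le_ncard (Set.subset_univ _) Set.finite_univ

lemma exists_max_indep (H : SimpleGraph α) : ∃ T : Set α, IndepSet H T ∧ T.ncard = alpha H := by
  have hne : {n | ∃ S : Set α, IndepSet H S ∧ S.ncard = n}.Nonempty :=
    ⟨0, ∅, fun x hx => absurd hx (Set.notMem_empty x), Set.ncard_empty α⟩
  have hbdd : BddAbove {n | ∃ S : Set α, IndepSet H S ∧ S.ncard = n} := by
    refine ⟨Nat.card α, ?_⟩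
    rintro n ⟨T, _, rfl⟩
    rw [← Set.ncard_univ]
    exact Set.ncard_le_ncard (Set.subset_univ T) Set.finite_univ
  have := Nat.sSup_mem hne hbdd
  obtain ⟨T, hT, hTn⟩ := this
  exact ⟨T, hT, hTn⟩

lemma matchNum_le_of_alpha : matchNum H ≤ Nat.card α - alpha H := by
  obtain ⟨T, hT, hTn⟩ := exists_max_indep H
  refine csSup_le ⟨0, ⊥, ?_, by simp [SimpleGraph.Subgraph.edgeSet_bot]⟩ ?_
  · intro v hv
    simp [SimpleGraph.Subgraph.verts_bot] at hv
  · rintro n ⟨M, hM, rfl⟩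
    calc M.edgeSet.ncard ≤ (Set.univ \ T).ncard := match_upper hM hT
    _ = Nat.card α - alpha H := by
        rw [Set.ncard_diff (Set.subset_univ T) (Set.toFinite _), Set.ncard_univ, hTn]

end Aux2

section Main
variable [Fintype V] {G : SimpleGraph V}

lemma exists_matching_fun {S : Set V} {Γ : Set (Set V)} (hΓ : Γ ⊆ Omega G) (hSΓ : S ∈ Γ) :
    ∃ f : V → V, Set.InjOn f (S \ ⋂₀ Γ) ∧
      ∀ x ∈ S \ ⋂₀ Γ, f x ∈ (⋃₀ Γ \ S) ∧ G.Adj x (f x) := by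
  classical
  have hS : MaxIndep G S := hΓ hSΓ
  have hins : insert S Γ = Γ := Set.insert_eq_self.mpr hSΓ
  have hall := hall_family hS Γ (Set.toFinite Γ) hΓ
  rw [hins] at hall
  set t : ↥(S \ ⋂₀ Γ) → Finset V :=
    fun x => (NS G {(x : V)} ∩ (⋃₀ Γ \ S)).toFinite.toFinset with ht
  have hcond : ∀ s : Finset ↥(S \ ⋂₀ Γ), s.card ≤ (s.biUnion t).card := by
    intro s
    set W : Set V := Subtype.val '' (↑s : Set ↥(S \ ⋂₀ Γ)) with hW
    have hWsub : W ⊆ S \ ⋂₀ Γ := by rintro v ⟨x, _, rfl⟩; exact x.2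
    have h1 : W.ncard = s.card := by
      rw [hW, Set.ncard_image_of_injective _ Subtype.val_injective, Set.ncard_coe_finset]
    have h2 : ((s.biUnion t : Finset V) : Set V) = NS G W ∩ (⋃₀ Γ \ S) := by
      ext v
      constructor
      · intro hv
        rw [Finset.coe_biUnion] at hv
        simp only [Set.mem_iUnion, Finset.mem_coe] at hv
        obtain ⟨x, hx, hvx⟩ := hv
        rw [ht, Set.Finite.mem_toFinset] at hvx
        obtain ⟨⟨w, hw, hadj⟩, hvUS⟩ := hvx
        rcases hw with rfl
        exact ⟨⟨(x : V), ⟨x, hx, rfl⟩, hadj⟩, hvUS⟩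
      · rintro ⟨⟨w, ⟨x, hx, rfl⟩, hadj⟩, hvUS⟩
        rw [Finset.coe_biUnion]
        simp only [Set.mem_iUnion, Finset.mem_coe]
        exact ⟨x, hx, by rw [ht, Set.Finite.mem_toFinset]; exact ⟨⟨(x : V), rfl, hadj⟩, hvUS⟩⟩
    have h3 : (s.biUnion t).card = (NS G W ∩ (⋃₀ Γ \ S)).ncard := by
      rw [← Set.ncard_coe_finset, h2]
    have h4 := hall W hWsub
    omega
  obtain ⟨f, hfinj, hft⟩ := (Finset.all_card_le_biUnion_card_iff_existsInjective' t).mp hcond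
  refine ⟨fun v => if h : v ∈ S \ ⋂₀ Γ then f ⟨v, h⟩ else v, ?_, ?_⟩
  · intro x hx y hy heq
    simp only [dif_pos hx, dif_pos hy] at heq
    exact Subtype.mk_eq_mk.mp (hfinj heq)
  · intro x hx
    simp only [dif_pos hx]
    have := hft ⟨x, hx⟩
    rw [ht, Set.Finite.mem_toFinset] at this
    obtain ⟨⟨w, hw, hadj⟩, hUS⟩ := this
    rcases hw with rfl
    exact ⟨hUS, hadj⟩

theorem stmt_16' (G : SimpleGraph V)
    (Γ : Set (Set V)) (hΓ : Γ ⊆ Omega G) (hne : Γ.Nonempty)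
    (h : (⋃₀ Γ).ncard + (⋂₀ Γ).ncard = 2 * alpha G) :
    alpha (G.induce (⋃₀ Γ)) + matchNum (G.induce (⋃₀ Γ)) = (⋃₀ Γ).ncard := by
  classical
  obtain ⟨S, hSΓ⟩ := hne
  set U := ⋃₀ Γ with hU
  set C := ⋂₀ Γ with hC
  have hS : MaxIndep G S := hΓ hSΓ
  have hCS : C ⊆ S := Set.sInter_subset_of_mem hSΓ
  have hSU : S ⊆ U := Set.subset_sUnion_of_mem hSΓ
  set H := G.induce U with hH
  -- alpha H = alpha G
  have halphaLe : alpha H ≤ alpha G := by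
    apply alpha_le
    intro T hT
    have hTind : IndepSet G (Subtype.val '' T) := by
      rintro x ⟨a, ha, rfl⟩ y ⟨b, hb, rfl⟩ hadj
      exact hT a ha b hb hadj
    calc T.ncard = (Subtype.val '' T).ncard :=
          (Set.ncard_image_of_injective _ Subtype.val_injective).symm
      _ ≤ alpha G := indep_ncard_le_alpha hTind
  have halphaGe : alpha G ≤ alpha H := by
    have hind : IndepSet H (Subtype.val ⁻¹' S) := by
      intro x hx y hy hadj
      exact hS.1 ↑x hx ↑y hy hadj
    have hcard : (Subtype.val ⁻¹' S : Set ↥U).ncard = S.ncard := by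
      rw [← Set.ncard_image_of_injective _ Subtype.val_injective,
        Subtype.image_preimage_coe, Set.inter_eq_self_of_subset_right hSU]
    calc alpha G = S.ncard := hS.2.symm
      _ = (Subtype.val ⁻¹' S : Set ↥U).ncard := hcard.symm
      _ ≤ alpha H := indep_ncard_le_alpha hind
  have halpha : alpha H = alpha G := le_antisymm halphaLe halphaGe
  -- matching lower bound
  obtain ⟨f, hfinj, hfprop⟩ := exists_matching_fun hΓ hSΓ
  set B := S \ C with hB
  set g : ↥U → ↥U := fun a => if h : (a : V) ∈ B then ⟨f ↑a, (hfprop _ h).1.1⟩ else a with hg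
  set sset : Set ↥U := Subtype.val ⁻¹' B with hsset
  have hgval : ∀ (a : ↥U), (ha : (a : V) ∈ B) → (g a : V) = f ↑a := by
    intro a ha
    rw [hg]
    simp only [dif_pos ha]
  have hginj : Set.InjOn g sset := by
    intro a ha b hb heq
    have hval := congrArg Subtype.val heq
    rw [hgval a ha, hgval b hb] at hval
    exact Subtype.coe_injective (hfinj ha hb hval)
  have hbij := hginj.bijOn_image
  set tset : Set ↥U := g '' sset with htset
  have hdisj : Disjoint sset tset := by
    rw [Set.disjoint_left]
    rintro a ha ⟨b, hb, rfl⟩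
    have h1 : (g b : V) ∈ U \ S := by
      rw [hgval b hb]; exact (hfprop _ hb).1
    have h2 : (g b : V) ∈ S := by
      have : (g b : V) ∈ B := ha
      exact this.1
    exact h1.2 h2
  have hadj : ∀ v : ↥sset, H.Adj ↑v (Set.BijOn.equiv g hbij v) := by
    intro v
    have hv : ((v : ↥U) : V) ∈ B := v.2
    have hval : ((Set.BijOn.equiv g hbij v : ↥tset) : ↥U) = g ↑v := rfl
    show H.Adj ↑v ↑(Set.BijOn.equiv g hbij v)
    rw [hval]
    show G.Adj ((v : ↥U) : V) ((g ↑v : ↥U) : V)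
    rw [hgval ↑v hv]
    exact (hfprop _ hv).2
  obtain ⟨M, hMverts, hMmatch⟩ :=
    SimpleGraph.Subgraph.IsMatching.exists_of_disjoint_sets_of_equiv hdisj
      (Set.BijOn.equiv g hbij) hadj
  have hssetcard : sset.ncard = B.ncard := by
    rw [hsset, ← Set.ncard_image_of_injective _ Subtype.val_injective,
      Subtype.image_preimage_coe, Set.inter_eq_self_of_subset_right
      (fun v hv => hSU hv.1)]
  have hlow : B.ncard ≤ matchNum H := by
    have hle : sset.ncard ≤ M.edgeSet.ncard := by
      refine match_lower hMmatch ?_ ?_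
      · rw [hMverts]; exact Set.subset_union_left
      · intro x hx y hy hadj
        exact hS.1 ↑x hx.1 ↑y hy.1 hadj
    have : M.edgeSet.ncard ≤ matchNum H := le_csSup matchNum_bddAbove ⟨M, hMmatch, rfl⟩
    omega
  have hup : matchNum H ≤ Nat.card ↥U - alpha H := matchNum_le_of_alpha
  have hcardU : Nat.card ↥U = U.ncard := Nat.card_coe_set_eq U
  have hBcard : B.ncard = alpha G - C.ncard := by
    rw [hB, Set.ncard_diff hCS (Set.toFinite _), hS.2]
  have hcle : C.ncard ≤ alpha G := by
    rw [← hS.2]; exact Set.ncard_le_ncard hCS (Set.toFinite _)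
  have hale : alpha G ≤ U.ncard := by
    rw [← hS.2]; exact Set.ncard_le_ncard hSU (Set.toFinite _)
  omega

end Main

theorem stmt_16 [Fintype V] (G : SimpleGraph V)
    (Γ : Set (Set V)) (hΓ : Γ ⊆ Omega G) (hne : Γ.Nonempty)
    (h : (⋃₀ Γ).ncard + (⋂₀ Γ).ncard = 2 * alpha G) :
    alpha (G.induce (⋃₀ Γ)) + matchNum (G.induce (⋃₀ Γ)) = (⋃₀ Γ).ncard :=
  stmt_16' G Γ hΓ hne h
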